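/- Let R be a commutative ring, n ≥ 2, and f, g₁, g₂, …, gₙ ∈ R. Assume that the sequence f, g₂, g₃, …, gₙ is a regular sequence on R. Let a = (a₁, a₂, …, aₙ) ∈ Rⁿ be a logarithmic vector, i.e., a₁g₁ + a₂g₂ + ⋯ + aₙgₙ ∈ (f). Then the following are equivalent: (i) a belongs to the trivial submodule T of Rⁿ generated by f·eᵢ (1 ≤ i ≤ n) and gⱼ·eᵢ − gᵢ·eⱼ (1 ≤ i < j ≤ n); (ii) a₁ belongs to the ideal (f, g₂, …, gₙ). -/

import Mathlib

open RingTheory.Sequence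

section helpers

variable {R : Type*} [CommRing R]

noncomputable def dotL {m : ℕ} (x : Fin m → R) : (Fin m → R) →ₗ[R] R where
  toFun v := ∑ i, v i * x i
  map_add' u v := by simp [add_mul, Finset.sum_add_distrib]
  map_smul' r v := by simp [Finset.mul_sum, mul_assoc]

lemma dotL_apply {m : ℕ} (x v : Fin m → R) : dotL x v = ∑ i, v i * x i := rfl

lemma dotL_single {m : ℕ} (x : Fin m → R) (j : Fin m) (r : R) :
    dotL x (Pi.single j r) = r * x j := by
  rw [dotL_apply, Finset.sum_eq_single j]
  · rw [Pi.single_eq_same]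
  · intro i _ hij; rw [Pi.single_eq_of_ne hij, zero_mul]
  · intro h; exact absurd (Finset.mem_univ j) h

lemma extendByZero_single {m k : ℕ} {s : Fin m → Fin k} (hs : Function.Injective s)
    (i : Fin m) (r : R) :
    Function.ExtendByZero.linearMap R s (Pi.single i r) = Pi.single (s i) r := by
  funext j
  rw [Function.ExtendByZero.linearMap_apply]
  by_cases h : ∃ i', s i' = j
  · obtain ⟨i', rfl⟩ := h
    rw [hs.extend_apply, Pi.single_apply, Pi.single_apply]
    simp [hs.eq_iff]
  · rw [Function.extend_apply' _ _ _ h, Pi.single_eq_of_ne, Pi.zero_apply]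
    rintro rfl; exact h ⟨i, rfl⟩

lemma key_lemma (R : Type*) [CommRing R] (f : R) :
    ∀ (m : ℕ) (x : Fin m → R),
      IsWeaklyRegular R (f :: List.ofFn x) →
      ∀ a : Fin m → R, (∑ i, a i * x i) ∈ Ideal.span {f} →
      a ∈ Submodule.span R
        ({v : Fin m → R | ∃ i, v = Pi.single i f} ∪
         {v : Fin m → R | ∃ i j, i < j ∧ v = Pi.single i (x j) - Pi.single j (x i)}) := by
  intro m
  induction m with
  | zero =>
    intro x _ a _
    have : a = 0 := funext fun i => i.elim0
    simp [this]
  | succ m ih =>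
    intro x hreg a ha
    set x' : Fin m → R := fun i => x i.castSucc with hx'
    have hlist : (f :: List.ofFn x) = (f :: List.ofFn x') ++ [x (Fin.last m)] := by
      rw [List.ofFn_succ', List.concat_eq_append, List.cons_append]
    rw [hlist, isWeaklyRegular_append_iff] at hreg
    obtain ⟨hreg1, hreg2⟩ := hreg
    rw [isWeaklyRegular_singleton_iff] at hreg2
    set I : Ideal R := Ideal.ofList (f :: List.ofFn x') with hI
    have hIT : (I • ⊤ : Submodule R R) = I := by rw [smul_eq_mul, Ideal.mul_top]
    have hfI : f ∈ I := by
      apply Ideal.subset_span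
      exact List.mem_cons_self
    have hx'I : ∀ i, x' i ∈ I := by
      intro i
      apply Ideal.subset_span
      exact List.mem_cons_of_mem _ (List.mem_ofFn.mpr ⟨i, rfl⟩)
    have hspanle : Ideal.span {f} ≤ I := by
      rw [Ideal.span_le]; simpa using hfI
    have hlastI : a (Fin.last m) * x (Fin.last m) ∈ I := by
      have hsum := hspanle ha
      rw [Fin.sum_univ_castSucc] at hsum
      have hsum2 : (∑ i : Fin m, a i.castSucc * x i.castSucc) ∈ I :=
        Ideal.sum_mem _ fun i _ => I.mul_mem_left _ (hx'I i)
      simpa using I.sub_mem hsum hsum2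
    have halast : a (Fin.last m) ∈ I := by
      have h0 : x (Fin.last m) • (Submodule.Quotient.mk (a (Fin.last m)) :
          R ⧸ (I • ⊤ : Submodule R R)) = x (Fin.last m) • (0 : R ⧸ (I • ⊤ : Submodule R R)) := by
        rw [smul_zero, ← Submodule.Quotient.mk_smul, Submodule.Quotient.mk_eq_zero, hIT,
          smul_eq_mul, mul_comm]
        exact hlastI
      have := hreg2 h0
      rw [Submodule.Quotient.mk_eq_zero, hIT] at this
      exact this
    have hset : {r : R | r ∈ (f :: List.ofFn x')} = Set.range (Fin.cons f x' : Fin (m + 1) → R) := by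
      ext r
      constructor
      · intro hr
        rcases List.mem_cons.mp hr with rfl | hr
        · exact ⟨0, rfl⟩
        · obtain ⟨i, rfl⟩ := List.mem_ofFn.mp hr
          exact ⟨i.succ, by simp⟩
      · rintro ⟨i, rfl⟩
        refine Fin.cases ?_ ?_ i
        · exact List.mem_cons_self
        · intro j
          simp only [Fin.cons_succ]
          exact List.mem_cons_of_mem _ (List.mem_ofFn.mpr ⟨j, rfl⟩)
      
    have hIeq : I = Ideal.span (Set.range (Fin.cons f x' : Fin (m + 1) → R)) := by
      rw [hI, ← hset]
    obtain ⟨c, hc⟩ := Ideal.mem_span_range_iff_exists_fun.mp (hIeq ▸ halast)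
    rw [Fin.sum_univ_succ] at hc
    simp only [Fin.cons_zero, Fin.cons_succ] at hc
    -- hc : c 0 * f + ∑ i : Fin m, c i.succ * x' i = a (Fin.last m)
    set gen : Fin m → (Fin (m + 1) → R) := fun k =>
      Pi.single k.castSucc (x (Fin.last m)) - Pi.single (Fin.last m) (x' k) with hgen
    set b : Fin (m + 1) → R :=
      a - c 0 • (Pi.single (Fin.last m) f : Fin (m + 1) → R) + ∑ k, c k.succ • gen k with hb
    have hblast : b (Fin.last m) = 0 := by
      have hgk : ∀ k : Fin m, gen k (Fin.last m) = -(x' k) := by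
        intro k
        simp only [hgen, Pi.sub_apply, Pi.single_eq_same,
          Pi.single_eq_of_ne (Fin.castSucc_lt_last k).ne', zero_sub]
      simp only [hb, Pi.add_apply, Pi.sub_apply, Pi.smul_apply, Finset.sum_apply,
        smul_eq_mul, Pi.single_eq_same]
      rw [Finset.sum_congr rfl fun k _ => by rw [hgk k]]
      rw [show (∑ k : Fin m, c k.succ * -(x' k)) = -∑ k : Fin m, c k.succ * x' k by
        rw [← Finset.sum_neg_distrib]; exact Finset.sum_congr rfl fun k _ => by ring]
      linear_combination -hc
    have hdotsingle : ∀ (j : Fin (m + 1)) (r : R), dotL x (Pi.single j r) = r * x j :=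
      dotL_single x
    have hdotgen : ∀ k : Fin m, dotL x (gen k) = 0 := by
      intro k
      rw [hgen]
      simp only [map_sub, hdotsingle]
      simp only [Fin.val_last, hx']
      ring
    have hbdot : dotL x b ∈ Ideal.span {f} := by
      rw [hb]
      rw [map_add, map_sub, map_smul, map_sum]
      simp only [map_smul, hdotgen, smul_zero, Finset.sum_const_zero, add_zero]
      refine Submodule.sub_mem _ ha ?_
      rw [hdotsingle, smul_eq_mul]
      exact Ideal.mul_mem_left _ _ (Ideal.mem_span_singleton.mpr ⟨x (Fin.last m), rfl⟩)
    set b' : Fin m → R := fun i => b i.castSucc with hb'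
    have hb'dot : (∑ i : Fin m, b' i * x' i) ∈ Ideal.span {f} := by
      have heq : dotL x b = ∑ i : Fin m, b' i * x' i := by
        rw [dotL_apply, Fin.sum_univ_castSucc, hblast, zero_mul, add_zero]
      rwa [heq] at hbdot
    have hIH := ih x' hreg1 b' hb'dot
    set E := Function.ExtendByZero.linearMap R (Fin.castSucc : Fin m → Fin (m + 1)) with hE
    have hEb : E b' = b := by
      funext j
      refine Fin.lastCases ?_ ?_ j
      · rw [hE, Function.ExtendByZero.linearMap_apply, Function.extend_apply', hblast]
        · rfl
        · rintro ⟨i, hi⟩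
          exact absurd hi (Fin.castSucc_lt_last i).ne
      · intro i
        rw [hE, Function.ExtendByZero.linearMap_apply, (Fin.castSucc_injective m).extend_apply]
    have hbmem : b ∈ Submodule.span R
        ({v : Fin (m + 1) → R | ∃ i, v = Pi.single i f} ∪
         {v : Fin (m + 1) → R | ∃ i j, i < j ∧ v = Pi.single i (x j) - Pi.single j (x i)}) := by
      have hmap := Submodule.mem_map_of_mem (f := E) hIH
      rw [Submodule.map_span] at hmap
      rw [← hEb]
      refine Submodule.span_mono ?_ hmap
      rintro v ⟨w, hw, rfl⟩
      rcases hw with ⟨i, rfl⟩ | ⟨i, j, hij, rfl⟩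
      · left
        exact ⟨i.castSucc, extendByZero_single (Fin.castSucc_injective m) i f⟩
      · right
        refine ⟨i.castSucc, j.castSucc, Fin.castSucc_lt_castSucc_iff.mpr hij, ?_⟩
        rw [map_sub, extendByZero_single (Fin.castSucc_injective m),
          extendByZero_single (Fin.castSucc_injective m)]
    have haeq : a = b + c 0 • (Pi.single (Fin.last m) f : Fin (m + 1) → R)
        - ∑ k, c k.succ • gen k := by
      rw [hb]; abel
    rw [haeq]
    refine Submodule.sub_mem _ (Submodule.add_mem _ hbmem ?_) ?_
    · exact Submodule.smul_mem _ _ (Submodule.subset_span (Or.inl ⟨Fin.last m, rfl⟩))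
    · refine Submodule.sum_mem _ fun k _ => Submodule.smul_mem _ _ ?_
      exact Submodule.subset_span
        (Or.inr ⟨k.castSucc, Fin.last m, Fin.castSucc_lt_last k, rfl⟩)

end helpers


/-- Let `R` be a commutative ring, `n ≥ 2`, and `f, g₁, …, gₙ ∈ R`
(with `g : Fin n → R`, `g ⟨0, _⟩` playing the role of `g₁`).  Assume `f, g₂, …, gₙ` is a
regular sequence on `R`.  Let `a = (a₁, …, aₙ)` be a logarithmic vector, i.e.
`a₁g₁ + ⋯ + aₙgₙ ∈ (f)`.  Then `a` belongs to the trivial submodule `T`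
(generated by `f·eᵢ` and `gⱼ·eᵢ − gᵢ·eⱼ`, `i < j`) if and only if
`a₁ ∈ (f, g₂, …, gₙ)`. -/
theorem stmt_2 (R : Type*) [CommRing R] (n : ℕ) (hn : 2 ≤ n) (f : R) (g : Fin n → R)
    (hreg : RingTheory.Sequence.IsRegular R (f :: ((List.finRange n).drop 1).map g))
    (a : Fin n → R) (hlog : ∑ i, a i * g i ∈ Ideal.span {f}) :
    a ∈ Submodule.span R
        ({v : Fin n → R | ∃ i : Fin n, v = Pi.single i f} ∪
          {v : Fin n → R | ∃ i j : Fin n, i < j ∧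
            v = Pi.single i (g j) - Pi.single j (g i)}) ↔
      a ⟨0, by omega⟩ ∈ Ideal.span ({f} ∪ g '' {i | i ≠ ⟨0, by omega⟩}) := by

  constructor
  · intro ha
    set z : Fin n := ⟨0, by omega⟩ with hzdef
    set J : Ideal R := Ideal.span ({f} ∪ g '' {i | i ≠ z}) with hJ
    have hle : Submodule.span R
        ({v : Fin n → R | ∃ i : Fin n, v = Pi.single i f} ∪
          {v : Fin n → R | ∃ i j : Fin n, i < j ∧
            v = Pi.single i (g j) - Pi.single j (g i)}) ≤
        Submodule.comap (LinearMap.proj z : (Fin n → R) →ₗ[R] R) J := by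
      rw [Submodule.span_le]
      rintro v (⟨i, rfl⟩ | ⟨i, j, hij, rfl⟩) <;>
        simp only [SetLike.mem_coe, Submodule.mem_comap, LinearMap.proj_apply]
      · rw [Pi.single_apply]
        split_ifs
        · exact Ideal.subset_span (Or.inl rfl)
        · exact zero_mem _
      · rw [Pi.sub_apply, Pi.single_apply, Pi.single_apply]
        by_cases h1 : z = i
        · rw [if_pos h1, if_neg (by rintro rfl; exact absurd h1 hij.ne')]
          refine Submodule.sub_mem _ ?_ (zero_mem _)
          exact Ideal.subset_span (Or.inr ⟨j, by rintro rfl; exact absurd h1 hij.ne', rfl⟩)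
        · rw [if_neg h1]
          by_cases h2 : z = j
          · rw [if_pos h2]
            refine Submodule.sub_mem _ (zero_mem _) ?_
            exact Ideal.subset_span (Or.inr ⟨i, by rintro rfl; exact absurd h2 hij.ne, rfl⟩)
          · rw [if_neg h2, sub_zero]; exact zero_mem J
    exact hle ha
  · intro ha
    obtain ⟨m, rfl⟩ : ∃ m, n = m + 1 := ⟨n - 1, by omega⟩
    have hz : (⟨0, by omega⟩ : Fin (m + 1)) = 0 := by
      apply Fin.ext; simp
    rw [hz] at ha
    set x : Fin m → R := fun i => g i.succ with hx
    have hlist : ((List.finRange (m + 1)).drop 1).map g = List.ofFn x := by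
      rw [List.finRange_succ, List.drop_succ_cons, List.drop_zero, List.map_map,
        List.ofFn_eq_map]
      rfl
    have hwr : RingTheory.Sequence.IsWeaklyRegular R (f :: List.ofFn x) := by
      have h := hreg.toIsWeaklyRegular
      rwa [hlist] at h
    have hset : ({f} ∪ g '' {i | i ≠ 0} : Set R)
        = Set.range (Fin.cons f x : Fin (m + 1) → R) := by
      ext r
      simp only [Set.mem_union, Set.mem_singleton_iff, Set.mem_image, Set.mem_setOf_eq,
        Set.mem_range]
      constructor
      · rintro (rfl | ⟨i, hi, rfl⟩)
        · exact ⟨0, rfl⟩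
        · obtain ⟨j, rfl⟩ := Fin.exists_succ_eq.mpr hi
          exact ⟨j.succ, by simp [hx]⟩
      · rintro ⟨i, rfl⟩
        refine Fin.cases ?_ ?_ i
        · left; rfl
        · intro j
          right
          exact ⟨j.succ, Fin.succ_ne_zero j, by simp [hx]⟩
    rw [hset, Ideal.mem_span_range_iff_exists_fun] at ha
    obtain ⟨c, hc⟩ := ha
    rw [Fin.sum_univ_succ] at hc
    simp only [Fin.cons_zero, Fin.cons_succ] at hc
    -- hc : c 0 * f + ∑ i : Fin m, c i.succ * x i = a 0
    set gen2 : Fin m → (Fin (m + 1) → R) := fun k =>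
      Pi.single (0 : Fin (m + 1)) (g k.succ) - Pi.single k.succ (g 0) with hgen2
    set b : Fin (m + 1) → R :=
      a - c 0 • (Pi.single (0 : Fin (m + 1)) f : Fin (m + 1) → R)
        - ∑ k, c k.succ • gen2 k with hb
    have hb0 : b 0 = 0 := by
      have hgk : ∀ k : Fin m, gen2 k 0 = g k.succ := by
        intro k
        simp only [hgen2, Pi.sub_apply, Pi.single_eq_same,
          Pi.single_eq_of_ne (Fin.succ_ne_zero k).symm, sub_zero]
      simp only [hb, Pi.sub_apply, Pi.smul_apply, Finset.sum_apply, smul_eq_mul,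
        Pi.single_eq_same]
      rw [Finset.sum_congr rfl fun k _ => by rw [hgk k]]
      linear_combination -hc
    have hdotgen2 : ∀ k : Fin m, dotL g (gen2 k) = 0 := by
      intro k
      rw [hgen2]
      simp only [map_sub, dotL_single]
      ring
    have hbdot : dotL g b ∈ Ideal.span {f} := by
      rw [hb, map_sub, map_sub, map_smul, map_sum]
      simp only [map_smul, hdotgen2, smul_zero, Finset.sum_const_zero, sub_zero]
      refine Submodule.sub_mem _ hlog ?_
      rw [dotL_single, smul_eq_mul]
      exact Ideal.mul_mem_left _ _ (Ideal.mem_span_singleton.mpr ⟨g 0, rfl⟩)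
    set b' : Fin m → R := fun i => b i.succ with hb'
    have hb'dot : (∑ i : Fin m, b' i * x i) ∈ Ideal.span {f} := by
      have heq : dotL g b = ∑ i : Fin m, b' i * x i := by
        rw [dotL_apply, Fin.sum_univ_succ, hb0, zero_mul, zero_add]
      rwa [heq] at hbdot
    have hIH := key_lemma R f m x hwr b' hb'dot
    set E := Function.ExtendByZero.linearMap R (Fin.succ : Fin m → Fin (m + 1)) with hE
    have hsuccinj : Function.Injective (Fin.succ : Fin m → Fin (m + 1)) :=
      Fin.succ_injective m
    have hEb : E b' = b := by
      funext j
      refine Fin.cases ?_ ?_ j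
      · rw [hE, Function.ExtendByZero.linearMap_apply, Function.extend_apply', hb0]
        · rfl
        · rintro ⟨i, hi⟩
          exact Fin.succ_ne_zero i hi
      · intro i
        rw [hE, Function.ExtendByZero.linearMap_apply, hsuccinj.extend_apply]
    have hbmem : b ∈ Submodule.span R
        ({v : Fin (m + 1) → R | ∃ i, v = Pi.single i f} ∪
         {v : Fin (m + 1) → R | ∃ i j, i < j ∧
            v = Pi.single i (g j) - Pi.single j (g i)}) := by
      have hmap := Submodule.mem_map_of_mem (f := E) hIH
      rw [Submodule.map_span] at hmap
      rw [← hEb]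
      refine Submodule.span_mono ?_ hmap
      rintro v ⟨w, hw, rfl⟩
      rcases hw with ⟨i, rfl⟩ | ⟨i, j, hij, rfl⟩
      · left
        exact ⟨i.succ, extendByZero_single hsuccinj i f⟩
      · right
        refine ⟨i.succ, j.succ, Fin.succ_lt_succ_iff.mpr hij, ?_⟩
        rw [map_sub, extendByZero_single hsuccinj, extendByZero_single hsuccinj]
    have haeq : a = b + c 0 • (Pi.single (0 : Fin (m + 1)) f : Fin (m + 1) → R)
        + ∑ k, c k.succ • gen2 k := by
      rw [hb]; abel
    rw [haeq]
    refine Submodule.add_mem _ (Submodule.add_mem _ hbmem ?_) ?_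
    · exact Submodule.smul_mem _ _ (Submodule.subset_span (Or.inl ⟨0, rfl⟩))
    · refine Submodule.sum_mem _ fun k _ => Submodule.smul_mem _ _ ?_
      exact Submodule.subset_span (Or.inr ⟨0, k.succ, Fin.succ_pos k, rfl⟩)
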